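/- If the underlying countable discrete metric space X is finite, then every isometric embedding of the 1-Wasserstein space over X is automatically surjective, and hence is induced by a permutation of X (i.e., it is a pushforward by a bijection of X). -/

import Mathlib

open scoped ENNReal

/-- If X is finite (with at least two points, discrete metric), then every
isometric embedding of the 1-Wasserstein space over X is surjective, hence induced by a
permutation of X (a pushforward by a bijection of X). -/
theorem finite_embedding_is_surjective {X : Type*} [Fintype X] [DecidableEq X] [Nontrivial X]
    (f : (X → ℝ≥0∞) → (X → ℝ≥0∞))
    (hmap : ∀ μ : X → ℝ≥0∞, (∑' x, μ x = 1) → ∑' x, f μ x = 1)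
    (hiso : ∀ μ ν : X → ℝ≥0∞, (∑' x, μ x = 1) → (∑' x, ν x = 1) →
      1 - ∑' x, min (f μ x) (f ν x) = 1 - ∑' x, min (μ x) (ν x)) :
    Set.SurjOn f {μ | ∑' x, μ x = 1} {μ | ∑' x, μ x = 1} ∧
    ∃ σ : Equiv.Perm X, ∀ μ : X → ℝ≥0∞, (∑' x, μ x = 1) →
      ∀ x : X, f μ x = μ (σ.symm x) := by
  classical
  set d : X → X → ℝ≥0∞ := fun x y => if y = x then 1 else 0 with hd
  have hdsum : ∀ x, ∑' y, d x y = 1 := fun x => tsum_ite_eq x 1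
  have hmin_d : ∀ (μ : X → ℝ≥0∞), (∑' z, μ z = 1) → ∀ x,
      ∑' z, min (μ z) (d x z) = μ x := by
    intro μ hμ x
    have hle : μ x ≤ 1 := hμ ▸ ENNReal.le_tsum x
    rw [tsum_eq_single x]
    · simp [hd, min_eq_left hle]
    · intro z hz; simp [hd, hz]
  have hlesum : ∀ (μ ν : X → ℝ≥0∞), (∑' z, μ z = 1) →
      (∑' z, min (μ z) (ν z)) ≤ 1 := by
    intro μ ν hμ
    calc (∑' z, min (μ z) (ν z)) ≤ ∑' z, μ z :=
        ENNReal.tsum_le_tsum fun z => min_le_left _ _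
      _ = 1 := hμ
  have hsub : ∀ a b : ℝ≥0∞, a ≤ 1 → b ≤ 1 → (1 : ℝ≥0∞) - a = 1 - b → a = b := by
    intro a b ha hb h
    exact (ENNReal.sub_right_inj ENNReal.one_ne_top ha hb).mp h
  have hdx : ∀ x, ∑' z, f (d x) z = 1 := fun x => hmap _ (hdsum x)
  -- disjoint supports
  have hdisj : ∀ x y, x ≠ y → ∀ z, min (f (d x) z) (f (d y) z) = 0 := by
    intro x y hxy
    have h := hiso (d x) (d y) (hdsum x) (hdsum y)
    have h0 : ∑' z, min (d x z) (d y z) = 0 := by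
      rw [ENNReal.tsum_eq_zero]
      intro z
      by_cases hzx : z = x
      · subst hzx; simp [hd, hxy]
      · simp [hd, hzx]
    rw [h0] at h
    have := hsub _ _ (hlesum _ _ (hdx x)) (by simp) h
    exact (ENNReal.tsum_eq_zero).mp this
  have hex : ∀ x, ∃ z, f (d x) z ≠ 0 := by
    intro x
    by_contra hc
    push_neg at hc
    have h0 : ∑' z, f (d x) z = 0 := by simp [hc]
    rw [hdx x] at h0
    exact one_ne_zero h0
  choose s hs using hex
  have hsinj : Function.Injective s := by
    intro x y hxy'
    by_contra hxy
    have h := hdisj x y hxy (s x)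
    rcases min_cases (f (d x) (s x)) (f (d y) (s x)) with ⟨he, _⟩ | ⟨he, _⟩
    · exact hs x (he ▸ h)
    · exact hs y (by rw [he, hxy'] at h; exact h)
  have hsbij : Function.Bijective s := Finite.injective_iff_bijective.mp hsinj
  have hzero : ∀ x z, z ≠ s x → f (d x) z = 0 := by
    intro x z hz
    obtain ⟨y, hy⟩ := hsbij.2 z
    have hyx : y ≠ x := by rintro rfl; exact hz hy.symm
    have h := hdisj x y (fun h' => hyx h'.symm) z
    rcases min_cases (f (d x) z) (f (d y) z) with ⟨he, _⟩ | ⟨he, _⟩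
    · exact he ▸ h
    · exact absurd (by rw [he, ← hy] at h; exact h) (hs y)
  have hdirac : ∀ x, f (d x) = d (s x) := by
    intro x
    funext z
    by_cases hz : z = s x
    · subst hz
      have h1 : ∑' z, f (d x) z = f (d x) (s x) :=
        tsum_eq_single _ fun z hz => hzero x z hz
      rw [hdx x] at h1
      rw [← h1]; simp [hd]
    · rw [hzero x z hz]; simp [hd, hz]
  have key : ∀ (μ : X → ℝ≥0∞), (∑' z, μ z = 1) → ∀ x, f μ (s x) = μ x := by
    intro μ hμ x
    have h := hiso μ (d x) hμ (hdsum x)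
    rw [hmin_d μ hμ x] at h
    have h2 : ∑' z, min (f μ z) (f (d x) z) = f μ (s x) := by
      rw [hdirac x]
      exact hmin_d (f μ) (hmap μ hμ) (s x)
    rw [h2] at h
    exact hsub _ _ ((hmap μ hμ) ▸ ENNReal.le_tsum (s x))
      (hμ ▸ ENNReal.le_tsum x) h
  let σ : Equiv.Perm X := Equiv.ofBijective s hsbij
  constructor
  · intro ν hν
    have hμ : ∑' x, ν (s x) = 1 := by
      have h := σ.tsum_eq ν
      simp only [σ, Equiv.ofBijective_apply] at h
      rw [h]; exact hν
    refine ⟨fun x => ν (s x), hμ, ?_⟩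
    funext z
    obtain ⟨x, rfl⟩ := hsbij.2 z
    exact key _ hμ x
  · refine ⟨σ, fun μ hμ x => ?_⟩
    have := key μ hμ (σ.symm x)
    rwa [show s (σ.symm x) = x from σ.apply_symm_apply x] at this
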